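/- (Differentiation under the integral and posterior-mean form of the score, used in Eq. (9).) Assume additionally that ∫ ‖x₀‖ q₀(x₀) dx₀ < ∞. Then q is differentiable at every x ∈ ℝ^d with ∇q(x) = ∫ ((α x₀ − x)/σ²) · k(x, x₀) q₀(x₀) dx₀; consequently, since q(x) > 0, ∇ log q(x) = (1/σ²) · ( α · ∫ x₀ · (k(x, x₀) q₀(x₀) / q(x)) dx₀ − x ), i.e., the score of the diffused marginal is determined by the posterior mean of the clean sample given the noised sample x. -/

import Mathlib

open MeasureTheory Real

lemma aux_texp {σ t : ℝ} (hσ : 0 < σ) (ht : 0 ≤ t) :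
    t * Real.exp (-t ^ 2 / (2 * σ ^ 2)) ≤ σ := by
  have h2 : (0:ℝ) < Real.exp (t ^ 2 / (2 * σ ^ 2)) := Real.exp_pos _
  rw [neg_div, Real.exp_neg, ← div_eq_mul_inv, div_le_iff₀ h2]
  have h5 := mul_le_mul_of_nonneg_left (Real.add_one_le_exp (t ^ 2 / (2 * σ ^ 2)))
    (by positivity : (0:ℝ) ≤ 2 * σ ^ 2 * σ)
  have hx : t ^ 2 / (2 * σ ^ 2) * (2 * σ ^ 2) = t ^ 2 :=
    div_mul_cancel₀ _ (by positivity)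
  nlinarith [sq_nonneg (t - σ), hσ, mul_pos hσ hσ]

set_option maxHeartbeats 1000000 in
theorem stmt_7
    (d : ℕ) (hd : 1 ≤ d)
    (q₀ : EuclideanSpace ℝ (Fin d) → ℝ)
    (hq₀_meas : Measurable q₀)
    (hq₀_nonneg : ∀ x₀, 0 ≤ q₀ x₀)
    (hq₀_int : Integrable q₀)
    (hq₀_one : ∫ x₀, q₀ x₀ = 1)
    (α σ : ℝ) (hσ : 0 < σ)
    (k : EuclideanSpace ℝ (Fin d) → EuclideanSpace ℝ (Fin d) → ℝ)
    (hk : ∀ x x₀, k x x₀ =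
      (2 * π * σ ^ 2) ^ (-(d : ℝ) / 2) * Real.exp (-‖x - α • x₀‖ ^ 2 / (2 * σ ^ 2)))
    (q : EuclideanSpace ℝ (Fin d) → ℝ)
    (hq_def : ∀ x, q x = ∫ x₀, k x x₀ * q₀ x₀)
    (hq_pos : ∀ x, 0 < q x)
    (hmoment : Integrable (fun x₀ => ‖x₀‖ * q₀ x₀)) :
    ∀ x : EuclideanSpace ℝ (Fin d),
      DifferentiableAt ℝ q x ∧
      gradient q x = ∫ x₀, ((k x x₀ * q₀ x₀) / σ ^ 2) • (α • x₀ - x) ∧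
      gradient (fun y => Real.log (q y)) x =
        (1 / σ ^ 2) • (α • (∫ x₀, (k x x₀ * q₀ x₀ / q x) • x₀) - x) := by
  intro x
  have hσ2 : (0:ℝ) < σ ^ 2 := by positivity
  set c : ℝ := (2 * π * σ ^ 2) ^ (-(d : ℝ) / 2) with hc
  have hc_pos : 0 < c := Real.rpow_pos_of_pos (by positivity) _
  have hk_pos : ∀ y a : EuclideanSpace ℝ (Fin d), 0 < k y a := by
    intro y a; rw [hk]; positivity
  have hk_le : ∀ y a : EuclideanSpace ℝ (Fin d), k y a ≤ c := by
    intro y a; rw [hk]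
    have h1 : Real.exp (-‖y - α • a‖ ^ 2 / (2 * σ ^ 2)) ≤ 1 := by
      rw [← Real.exp_zero]
      apply Real.exp_le_exp.mpr
      apply div_nonpos_of_nonpos_of_nonneg
      · simpa using sq_nonneg ‖y - α • a‖
      · positivity
    calc c * Real.exp (-‖y - α • a‖ ^ 2 / (2 * σ ^ 2)) ≤ c * 1 := by
          exact mul_le_mul_of_nonneg_left h1 hc_pos.le
      _ = c := mul_one c
  have hkcont : ∀ y : EuclideanSpace ℝ (Fin d), Continuous (fun a : EuclideanSpace ℝ (Fin d) => k y a) := by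
    intro y
    have : Continuous fun a : EuclideanSpace ℝ (Fin d) => -‖y - α • a‖ ^ 2 / (2 * σ ^ 2) :=
      (((continuous_const.sub (continuous_id.const_smul α)).norm.pow 2).neg).div_const _
    have h : Continuous fun a : EuclideanSpace ℝ (Fin d) =>
        c * Real.exp (-‖y - α • a‖ ^ 2 / (2 * σ ^ 2)) :=
      continuous_const.mul (Real.continuous_exp.comp this)
    simpa only [← hk] using h
  -- integrability of the main integrand
  have hf_int : ∀ y : EuclideanSpace ℝ (Fin d), Integrable (fun a => k y a * q₀ a) := by
    intro y
    apply Integrable.mono' (hq₀_int.const_mul c)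
    · exact (hkcont y).aestronglyMeasurable.mul hq₀_meas.aestronglyMeasurable
    · filter_upwards with a
      rw [Real.norm_eq_abs, abs_of_nonneg (mul_nonneg (hk_pos y a).le (hq₀_nonneg a))]
      exact mul_le_mul_of_nonneg_right (hk_le y a) (hq₀_nonneg a)
  -- key bound
  have hkey : ∀ y a : EuclideanSpace ℝ (Fin d), k y a * ‖α • a - y‖ ≤ c * σ := by
    intro y a
    rw [hk, norm_sub_rev (α • a) y, mul_assoc, mul_comm (Real.exp (-‖y - α • a‖ ^ 2 / (2 * σ ^ 2)))]
    exact mul_le_mul_of_nonneg_left (aux_texp hσ (norm_nonneg _)) hc_pos.le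
  -- derivative of k in its first variable
  have hderiv : ∀ (y a : EuclideanSpace ℝ (Fin d)), HasFDerivAt (fun z => k z a)
      ((InnerProductSpace.toDual ℝ (EuclideanSpace ℝ (Fin d))) ((k y a / σ ^ 2) • (α • a - y))) y := by
    intro y a
    have h1 : HasFDerivAt (fun z : EuclideanSpace ℝ (Fin d) => z - α • a) (ContinuousLinearMap.id ℝ (EuclideanSpace ℝ (Fin d))) y :=
      (hasFDerivAt_id y).sub_const _
    have h2 := h1.inner ℝ h1
    have h3 : HasFDerivAt (fun z : EuclideanSpace ℝ (Fin d) => -‖z - α • a‖ ^ 2 / (2 * σ ^ 2))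
        ((-(1 / σ ^ 2)) • ((InnerProductSpace.toDual ℝ (EuclideanSpace ℝ (Fin d))) (y - α • a))) y := by
      have e1 : (fun z : EuclideanSpace ℝ (Fin d) => -‖z - α • a‖ ^ 2 / (2 * σ ^ 2)) =
          fun z => (-(1 / (2 * σ ^ 2))) * (inner ℝ (z - α • a) (z - α • a) : ℝ) := by
        funext z
        rw [real_inner_self_eq_norm_sq]
        ring
      rw [e1]
      have h4 := h2.const_mul (-(1 / (2 * σ ^ 2)))
      refine h4.congr_fderiv ?_
      ext v
      simp only [ContinuousLinearMap.coe_smul', Pi.smul_apply,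
        InnerProductSpace.toDual_apply_apply, ContinuousLinearMap.comp_apply,
        ContinuousLinearMap.prod_apply, ContinuousLinearMap.coe_id', id_eq,
        fderivInnerCLM_apply, smul_eq_mul]
      rw [real_inner_comm v (y - α • a)]
      ring
    have h5 := (h3.exp).const_mul c
    have h6 : (fun z : EuclideanSpace ℝ (Fin d) => k z a)
        = fun z => c * Real.exp (-‖z - α • a‖ ^ 2 / (2 * σ ^ 2)) := by
      funext z; rw [hk]
    rw [h6]
    refine h5.congr_fderiv ?_
    ext w
    simp only [ContinuousLinearMap.coe_smul', Pi.smul_apply,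
      InnerProductSpace.toDual_apply_apply, smul_eq_mul]
    have e2 : (α • a - y) = -(y - α • a) := by abel
    rw [real_inner_smul_left, e2, inner_neg_left, hk]
    ring
  -- derivative of the full integrand
  have hderivF : ∀ (y a : EuclideanSpace ℝ (Fin d)), HasFDerivAt (fun z => k z a * q₀ a)
      ((InnerProductSpace.toDual ℝ (EuclideanSpace ℝ (Fin d)))
        (((k y a * q₀ a) / σ ^ 2) • (α • a - y))) y := by
    intro y a
    have h := (hderiv y a).mul_const (q₀ a)
    have e : (InnerProductSpace.toDual ℝ (EuclideanSpace ℝ (Fin d)))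
        (((k y a * q₀ a) / σ ^ 2) • (α • a - y))
        = q₀ a • ((InnerProductSpace.toDual ℝ (EuclideanSpace ℝ (Fin d)))
          ((k y a / σ ^ 2) • (α • a - y))) := by
      rw [← _root_.map_smul, smul_smul]
      congr 2
      ring
    rw [e]
    exact h
  -- dominated differentiation
  have hmain : HasFDerivAt (fun y => ∫ a, k y a * q₀ a)
      (∫ a, (InnerProductSpace.toDual ℝ (EuclideanSpace ℝ (Fin d)))
        (((k x a * q₀ a) / σ ^ 2) • (α • a - x))) x := by
    apply hasFDerivAt_integral_of_dominated_of_fderiv_le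
      (F' := fun y a => (InnerProductSpace.toDual ℝ (EuclideanSpace ℝ (Fin d)))
        (((k y a * q₀ a) / σ ^ 2) • (α • a - y)))
      (bound := fun a => (c / σ) * q₀ a) (s := Metric.ball x 1) (Metric.ball_mem_nhds x one_pos)
    · filter_upwards with y
      exact (hkcont y).aestronglyMeasurable.mul hq₀_meas.aestronglyMeasurable
    · exact hf_int x
    · apply Continuous.comp_aestronglyMeasurable
        (InnerProductSpace.toDual ℝ (EuclideanSpace ℝ (Fin d))).continuous
      have e : (fun a : EuclideanSpace ℝ (Fin d) =>
          ((k x a * q₀ a) / σ ^ 2) • (α • a - x))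
          = fun a => ((k x a * q₀ a) * (σ ^ 2)⁻¹) • (α • a - x) := by
        simp only [div_eq_mul_inv]
      rw [e]
      exact ((((hkcont x).aestronglyMeasurable.mul
        hq₀_meas.aestronglyMeasurable).mul aestronglyMeasurable_const).smul
        (((continuous_id.const_smul α).sub continuous_const).aestronglyMeasurable))
    · filter_upwards with a
      intro y _
      rw [(InnerProductSpace.toDual ℝ (EuclideanSpace ℝ (Fin d))).norm_map, norm_smul, Real.norm_eq_abs,
        abs_of_nonneg (div_nonneg (mul_nonneg (hk_pos y a).le (hq₀_nonneg a)) hσ2.le)]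
      have h := mul_le_mul_of_nonneg_left (hkey y a)
        (div_nonneg (hq₀_nonneg a) hσ2.le)
      calc k y a * q₀ a / σ ^ 2 * ‖α • a - y‖
          = q₀ a / σ ^ 2 * (k y a * ‖α • a - y‖) := by ring
        _ ≤ q₀ a / σ ^ 2 * (c * σ) := h
        _ = c / σ * q₀ a := by field_simp
    · exact hq₀_int.const_mul _
    · filter_upwards with a
      intro y _
      exact hderivF y a
  -- identify the derivative with a gradient
  set v : EuclideanSpace ℝ (Fin d) := ∫ a, ((k x a * q₀ a) / σ ^ 2) • (α • a - x) with hv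
  have hFv : (∫ a, (InnerProductSpace.toDual ℝ (EuclideanSpace ℝ (Fin d)))
      (((k x a * q₀ a) / σ ^ 2) • (α • a - x)))
      = (InnerProductSpace.toDual ℝ (EuclideanSpace ℝ (Fin d))) v := by
    rw [hv]
    exact (InnerProductSpace.toDual ℝ
      (EuclideanSpace ℝ (Fin d))).toLinearIsometry.integral_comp_comm _
  have hgrad : HasGradientAt q v x := by
    rw [hasGradientAt_iff_hasFDerivAt]
    have hq' : q = fun y => ∫ a, k y a * q₀ a := funext hq_def
    rw [hq', ← hFv]
    exact hmain
  have hlog : HasGradientAt (fun y => Real.log (q y)) ((q x)⁻¹ • v) x := by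
    rw [hasGradientAt_iff_hasFDerivAt]
    have h := (hgrad.hasFDerivAt).log (ne_of_gt (hq_pos x))
    rw [_root_.map_smul]
    exact h
  -- integrability of the moment-weighted integrand
  have hg_int : Integrable (fun a : EuclideanSpace ℝ (Fin d) => (k x a * q₀ a) • a) := by
    apply Integrable.mono' (hmoment.const_mul c)
    · exact (((hkcont x).aestronglyMeasurable.mul
        hq₀_meas.aestronglyMeasurable).smul aestronglyMeasurable_id)
    · filter_upwards with a
      rw [norm_smul, Real.norm_eq_abs,
        abs_of_nonneg (mul_nonneg (hk_pos x a).le (hq₀_nonneg a))]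
      calc k x a * q₀ a * ‖a‖ ≤ c * q₀ a * ‖a‖ := by
            exact mul_le_mul_of_nonneg_right
              (mul_le_mul_of_nonneg_right (hk_le x a) (hq₀_nonneg a)) (norm_nonneg a)
        _ = c * (‖a‖ * q₀ a) := by ring
  -- rewrite v
  have hv2 : v = (1 / σ ^ 2) • (α • (∫ a, (k x a * q₀ a) • a) - (q x) • x) := by
    rw [hv]
    have h1 : (fun a : EuclideanSpace ℝ (Fin d) => ((k x a * q₀ a) / σ ^ 2) • (α • a - x))
        = fun a : EuclideanSpace ℝ (Fin d) => (1 / σ ^ 2) • ((α • ((k x a * q₀ a) • a)) - (k x a * q₀ a) • x) := by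
      funext a
      match_scalars <;> ring
    have hint1 : Integrable (fun a : EuclideanSpace ℝ (Fin d) =>
        α • ((k x a * q₀ a) • a)) := hg_int.smul α
    have hint2 : Integrable (fun a : EuclideanSpace ℝ (Fin d) =>
        (k x a * q₀ a) • x) := (hf_int x).smul_const x
    rw [h1, integral_smul, integral_sub hint1 hint2,
      integral_smul, integral_smul_const, ← hq_def x]
  have hI : (∫ a, (k x a * q₀ a / q x) • a : EuclideanSpace ℝ (Fin d)) = (q x)⁻¹ • ∫ a, (k x a * q₀ a) • a := by
    rw [← integral_smul]
    congr 1
    funext a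
    rw [smul_smul, div_eq_inv_mul]
  refine ⟨hgrad.differentiableAt, hgrad.gradient, ?_⟩
  rw [hlog.gradient, hI, hv2]
  have hqx : q x ≠ 0 := ne_of_gt (hq_pos x)
  match_scalars <;> field_simp <;> exact Or.inl (by ring)
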